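/- Let T = E₄ and Q be the 4×4 symmetric nonnegative integer matrix with rows (0,0,1,1),(0,2,0,0),(1,0,0,1),(1,0,1,0). Then the only symmetric nonnegative integer 4×4 matrices U satisfying QU = U + TU and U² = E + Q + U + TU are U₁ with rows (0,1,0,0),(1,2,1,1),(0,1,0,0),(0,1,0,0) and U₂ with rows (1,0,1,1),(0,3,0,0),(1,0,1,1),(1,0,1,1). -/

import Mathlib

set_option maxHeartbeats 1000000

/-- With `T = E₄` and
`Q = !![0,0,1,1; 0,2,0,0; 1,0,0,1; 1,0,1,0]`, the only symmetric nonnegative integer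
`4 × 4` matrices `U` satisfying `QU = U + TU` and `U² = E + Q + U + TU` are the two
listed matrices. -/
theorem stmt_6 (U : Matrix (Fin 4) (Fin 4) ℤ)
    (hUn : ∀ i j, 0 ≤ U i j) (hUs : U.IsSymm)
    (T : Matrix (Fin 4) (Fin 4) ℤ) (hT : T = 1)
    (Q : Matrix (Fin 4) (Fin 4) ℤ)
    (hQ : Q = !![0,0,1,1; 0,2,0,0; 1,0,0,1; 1,0,1,0])
    (e1 : Q * U = U + T * U) (e2 : U * U = 1 + Q + U + T * U) :
    U = !![0,1,0,0; 1,2,1,1; 0,1,0,0; 0,1,0,0] ∨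
    U = !![1,0,1,1; 0,3,0,0; 1,0,1,1; 1,0,1,1] := by
  subst hT hQ
  have hs : ∀ i j, U j i = U i j := fun i j => hUs.apply i j
  have E1 := fun i j => congrFun (congrFun e1 i) j
  have E2 := fun i j => congrFun (congrFun e2 i) j
  simp only [Matrix.mul_apply, Fin.sum_univ_four, Matrix.add_apply, Matrix.one_mul,
    Matrix.one_apply, Matrix.cons_val', Matrix.cons_val_zero, Matrix.cons_val_one,
    Matrix.head_cons, Matrix.empty_val', Matrix.cons_val_fin_one, Matrix.head_fin_const,
    Matrix.cons_val_two, Matrix.tail_cons, Matrix.cons_val_three] at E1 E2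
  have row : ∀ j, U 2 j = U 0 j ∧ U 3 j = U 0 j := by
    intro j
    have h0 := E1 0 j
    have h2 := E1 2 j
    have h3 := E1 3 j
    simp at h0 h2 h3
    constructor <;> omega
  have q00 := E2 0 0
  have q01 := E2 0 1
  have q11 := E2 1 1
  have h20 : U 2 0 = U 0 0 := (row 0).1
  have h30 : U 3 0 = U 0 0 := (row 0).2
  have h21 : U 2 1 = U 0 1 := (row 1).1
  have h31 : U 3 1 = U 0 1 := (row 1).2
  have h02 : U 0 2 = U 0 0 := by rw [hs 2 0, h20]
  have h03 : U 0 3 = U 0 0 := by rw [hs 3 0, h30]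
  have h12 : U 1 2 = U 0 1 := by rw [hs 2 1, h21]
  have h13 : U 1 3 = U 0 1 := by rw [hs 3 1, h31]
  have h10 : U 1 0 = U 0 1 := (hs 1 0).symm
  have h22 : U 2 2 = U 0 0 := by rw [(row 2).1, h02]
  have h32 : U 3 2 = U 0 0 := by rw [(row 2).2, h02]
  have h23 : U 2 3 = U 0 0 := by rw [(row 3).1, h03]
  have h33 : U 3 3 = U 0 0 := by rw [(row 3).2, h03]
  have hna := hUn 0 0
  have hnb := hUn 0 1
  have hnc := hUn 1 1
  obtain ⟨a, ha⟩ : ∃ a, U 0 0 = a := ⟨_, rfl⟩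
  obtain ⟨b, hb⟩ : ∃ b, U 0 1 = b := ⟨_, rfl⟩
  obtain ⟨c, hc⟩ : ∃ c, U 1 1 = c := ⟨_, rfl⟩
  simp only [ha, hb, hc] at h02 h03 h10 h12 h13 h20 h21 h30 h31 h22 h32 h23 h33 hna hnb hnc
  simp only [ha, hb, hc, h02, h03, h10, h12, h13, h20, h21, h30, h31] at q00 q01 q11
  norm_num at q00 q01 q11
  have hale : a ≤ 1 := by nlinarith
  interval_cases a
  · have hb1 : b = 1 := by nlinarith
    have hc2 : c = 2 := by rw [hb1] at q01; omega
    subst hb1 hc2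
    clear E1 E2 e1 e2 hs row hUn hUs q00 q01 q11
    left
    ext i j
    fin_cases i <;> fin_cases j <;> simp_all [Matrix.vecHead, Matrix.vecTail]
  · have hb0 : b = 0 := by nlinarith
    have hc3 : c = 3 := by rw [hb0] at q11; nlinarith
    subst hb0 hc3
    clear E1 E2 e1 e2 hs row hUn hUs q00 q01 q11
    right
    ext i j
    fin_cases i <;> fin_cases j <;> simp_all [Matrix.vecHead, Matrix.vecTail]
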